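/- If f, g : ℤ₊ → ℂ are solutions (with f bounded) of the same Marchenko-type equation h(s) − ∑_{p=0}^{∞} h(p) F(p+s−1) = 0 for s ≥ 2, where the kernel F satisfies |F_n| ≤ M_n ∑_{p=⌊n/2⌋}^{∞} η_p with η ∈ ℓ¹₁(ℤ₊) (first moment summable) and M_n bounded, then any bounded solution h belongs to ℓ¹(ℤ₊). -/

import Mathlib

open Filter Finset

set_option maxHeartbeats 1000000

noncomputable def glmA (F : ℕ → ℂ) (N : ℕ) (φ : ℕ → ℂ) : ℕ → ℂ :=
  fun s => ∑' q : ℕ, φ (q + N) * F (q + N + s - 1)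

noncomputable def glmIter (F : ℕ → ℂ) (N : ℕ) (φ : ℕ → ℂ) : ℕ → ℕ → ℂ
  | 0 => φ
  | n + 1 => glmA F N (glmIter F N φ n)

/-- Marchenko bootstrap: a bounded solution of the homogeneous GLM-type equation
with a kernel having summable first moment bound is absolutely summable. -/
theorem marchenko_bootstrap (h F : ℕ → ℂ) (M η : ℕ → ℝ)
    (hb : ∃ B, ∀ n, ‖h n‖ ≤ B)
    (heq : ∀ s : ℕ, 2 ≤ s → h s = ∑' p : ℕ, h p * F (p + s - 1))
    (hη : ∀ n, 0 ≤ η n) (hη1 : Summable (fun n : ℕ => (1 + n : ℝ) * η n))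
    (hM : ∃ B, ∀ n, |M n| ≤ B)
    (hFb : ∀ n : ℕ, ‖F n‖ ≤ M n * ∑' p : ℕ, η (n / 2 + p)) :
    Summable (fun n => ‖h n‖) := by
  classical
  obtain ⟨B0, hB0⟩ := hb
  obtain ⟨K0, hK0⟩ := hM
  set B : ℝ := max B0 0 with hBdef
  have hB : ∀ n, ‖h n‖ ≤ B := fun n => (hB0 n).trans (le_max_left _ _)
  have hBnn : 0 ≤ B := le_max_right _ _
  set K : ℝ := max K0 0 with hKdef
  have hK : ∀ n, |M n| ≤ K := fun n => (hK0 n).trans (le_max_left _ _)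
  have hKnn : 0 ≤ K := le_max_right _ _
  have hηs : Summable η := by
    refine hη1.of_nonneg_of_le hη fun n => ?_
    have h1 : (1:ℝ) ≤ 1 + n := by
      have : (0:ℝ) ≤ n := Nat.cast_nonneg n
      linarith
    nlinarith [hη n]
  set T : ℕ → ℝ := fun n => ∑' p, η (n / 2 + p) with hTdef
  have hTnn : ∀ n, 0 ≤ T n := fun n => tsum_nonneg fun p => hη _
  have hFT : ∀ n, ‖F n‖ ≤ K * T n := by
    intro n
    refine (hFb n).trans ?_
    exact mul_le_mul_of_nonneg_right ((le_abs_self _).trans (hK n)) (hTnn n)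
  -- Summability of T
  have hwsum : ∀ k : ℕ, Summable fun m => (if k ≤ m then η m else 0) := by
    intro k
    refine hηs.of_nonneg_of_le (fun m => ?_) (fun m => ?_) <;> split <;>
      simp [hη m, le_rfl]
  have hw : ∀ k : ℕ, (∑' p : ℕ, η (k + p)) = ∑' m : ℕ, (if k ≤ m then η m else 0) := by
    intro k
    have hinj : Function.Injective (fun p : ℕ => k + p) := fun a b hab => by
      simpa using hab
    have h0 : Function.support (fun m : ℕ => if k ≤ m then η m else 0) ⊆
        Set.range (fun p : ℕ => k + p) := by
      intro m hm
      by_cases hkm : k ≤ m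
      · exact ⟨m - k, by simp; omega⟩
      · simp [Function.mem_support, if_neg hkm] at hm
    calc (∑' p : ℕ, η (k + p))
        = ∑' p : ℕ, (if k ≤ k + p then η (k + p) else 0) := by
          refine tsum_congr fun p => ?_
          rw [if_pos (by omega)]
      _ = ∑' m : ℕ, (if k ≤ m then η m else 0) := hinj.tsum_eq h0
  have hTsum : Summable T := by
    refine summable_of_sum_range_le (c := 2 * ∑' m : ℕ, (1 + (m:ℝ)) * η m) hTnn ?_
    intro R
    have hTk : ∀ k, T k = ∑' m : ℕ, (if k / 2 ≤ m then η m else 0) := fun k => hw (k / 2)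
    calc ∑ k ∈ range R, T k
        = ∑' m : ℕ, ∑ k ∈ range R, (if k / 2 ≤ m then η m else 0) := by
          rw [Summable.tsum_finsetSum (fun k _ => hwsum (k / 2))]
          exact Finset.sum_congr rfl fun k _ => hTk k
      _ ≤ ∑' m : ℕ, 2 * ((1 + (m:ℝ)) * η m) := by
          refine Summable.tsum_le_tsum (fun m => ?_) ?_ (hη1.mul_left 2)
          · calc ∑ k ∈ range R, (if k / 2 ≤ m then η m else 0)
                ≤ ∑ k ∈ range R, (if k ∈ range (2 * m + 2) then η m else 0) := by
                  refine Finset.sum_le_sum fun k _ => ?_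
                  split <;> split <;> simp_all [hη m] <;> omega
              _ = ∑ k ∈ range R ∩ range (2 * m + 2), η m := Finset.sum_ite_mem _ _ _
              _ ≤ (2 * m + 2) * η m := by
                  rw [Finset.sum_const, nsmul_eq_mul]
                  refine mul_le_mul_of_nonneg_right ?_ (hη m)
                  have := Finset.card_le_card
                    (Finset.inter_subset_right (s₁ := range R) (s₂ := range (2 * m + 2)))
                  simp only [Finset.card_range] at this ⊢
                  exact_mod_cast this
              _ = 2 * ((1 + (m:ℝ)) * η m) := by push_cast; ring
          · exact summable_sum fun k _ => hwsum (k / 2)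
      _ = 2 * ∑' m : ℕ, (1 + (m:ℝ)) * η m := tsum_mul_left
  have hFsum : Summable fun n => ‖F n‖ :=
    Summable.of_nonneg_of_le (fun n => norm_nonneg _) hFT (hTsum.mul_left K)
  have hFshift : ∀ k : ℕ, Summable fun j => ‖F (j + k)‖ := fun k =>
    (summable_nat_add_iff k).mpr hFsum
  set W : ℕ → ℝ := fun k => ∑' j, ‖F (j + k)‖ with hWdef
  have hWnn : ∀ k, 0 ≤ W k := fun k => tsum_nonneg fun j => norm_nonneg _
  have hWanti : ∀ i j : ℕ, i ≤ j → W j ≤ W i := by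
    intro i j hij
    obtain ⟨d, rfl⟩ := Nat.exists_eq_add_of_le hij
    refine Summable.tsum_le_tsum_of_inj (fun q => q + d) (fun a b hab => by simpa using hab)
      (fun c _ => norm_nonneg _) (fun q => ?_) (hFshift (i + d)) (hFshift i)
    show ‖F (q + (i + d))‖ ≤ ‖F (q + d + i)‖
    rw [show q + d + i = q + (i + d) by omega]
  have hWto0 : Tendsto W atTop (nhds 0) := tendsto_sum_nat_add fun n => ‖F n‖
  obtain ⟨N0, hN0⟩ : ∃ N0, ∀ m ≥ N0, W m ≤ 1 / 2 := by
    have := hWto0.eventually (eventually_le_nhds (by norm_num : (0:ℝ) < 1 / 2))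
    exact eventually_atTop.mp this
  set N : ℕ := N0 + 2 with hNdef
  have hN2 : 2 ≤ N := by omega
  have hWhalf : ∀ m, N - 1 ≤ m → W m ≤ 1 / 2 := fun m hm => hN0 m (by omega)
  -- uniform bound on ‖F‖
  set E : ℝ := ∑' m, η m with hEdef
  have hTE : ∀ n, T n ≤ E := by
    intro n
    refine Summable.tsum_le_tsum_of_inj (fun p => n / 2 + p) (fun a b hab => by simpa using hab)
      (fun c _ => hη c) (fun p => le_rfl) ?_ hηs
    have := (summable_nat_add_iff (f := η) (n / 2)).mpr hηs
    exact this.congr fun p => by rw [Nat.add_comm]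
  have hEnn : 0 ≤ E := tsum_nonneg fun m => hη m
  set Fm : ℝ := K * E with hFmdef
  have hFm : ∀ n, ‖F n‖ ≤ Fm := fun n =>
    (hFT n).trans (mul_le_mul_of_nonneg_left (hTE n) hKnn)
  have hFmnn : 0 ≤ Fm := mul_nonneg hKnn hEnn
  -- generic operator bound
  have hA : ∀ (φ : ℕ → ℂ) (c : ℝ), 0 ≤ c → (∀ q, ‖φ (q + N)‖ ≤ c) → ∀ s,
      Summable (fun q => ‖φ (q + N) * F (q + N + s - 1)‖) ∧
      ‖glmA F N φ s‖ ≤ c / 2 := by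
    intro φ c hc hφ s
    have hmaj : ∀ q : ℕ, ‖φ (q + N) * F (q + N + s - 1)‖ ≤ c * ‖F (q + (N + s - 1))‖ := by
      intro q
      rw [norm_mul, show q + N + s - 1 = q + (N + s - 1) by omega]
      exact mul_le_mul (hφ q) le_rfl (norm_nonneg _) hc
    have hmsum : Summable fun q => c * ‖F (q + (N + s - 1))‖ :=
      (hFshift (N + s - 1)).mul_left c
    have hsum : Summable fun q => ‖φ (q + N) * F (q + N + s - 1)‖ :=
      Summable.of_nonneg_of_le (fun q => norm_nonneg _) hmaj hmsum
    refine ⟨hsum, ?_⟩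
    calc ‖glmA F N φ s‖ ≤ ∑' q, ‖φ (q + N) * F (q + N + s - 1)‖ :=
          norm_tsum_le_tsum_norm hsum
      _ ≤ ∑' q, c * ‖F (q + (N + s - 1))‖ := Summable.tsum_le_tsum hmaj hsum hmsum
      _ = c * W (N + s - 1) := by rw [tsum_mul_left]
      _ ≤ c * (1 / 2) := mul_le_mul_of_nonneg_left (hWhalf _ (by omega)) hc
      _ = c / 2 := by ring
  -- bound on iterates of h
  have hHk : ∀ n s, ‖glmIter F N h n s‖ ≤ B * (1 / 2) ^ n := by
    intro n
    induction n with
    | zero => intro s; simpa [glmIter] using hB s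
    | succ n ih =>
      intro s
      have := (hA (glmIter F N h n) (B * (1 / 2) ^ n)
        (by positivity) (fun q => ih (q + N)) s).2
      calc ‖glmIter F N h (n + 1) s‖ = ‖glmA F N (glmIter F N h n) s‖ := rfl
        _ ≤ (B * (1 / 2) ^ n) / 2 := this
        _ = B * (1 / 2) ^ (n + 1) := by ring
  -- summability of equation terms, and the splitting identity
  set g : ℕ → ℂ := fun s => ∑ p ∈ range N, h p * F (p + s - 1) with hgdef
  have hsplit : ∀ s, N ≤ s → h s = g s + glmA F N h s := by
    intro s hs
    have hs2 : 2 ≤ s := le_trans hN2 hs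
    have hsum : Summable fun p => h p * F (p + s - 1) := by
      refine Summable.of_norm (Summable.of_nonneg_of_le (fun p => norm_nonneg _)
        (fun p => ?_) ((hFshift (s - 1)).mul_left B))
      rw [norm_mul, show p + s - 1 = p + (s - 1) by omega]
      exact mul_le_mul (hB p) le_rfl (norm_nonneg _) hBnn
    have := Summable.sum_add_tsum_nat_add (f := fun p => h p * F (p + s - 1)) N hsum
    rw [heq s hs2, ← this]
    rfl
  set C1 : ℝ := N * (B * W 0) with hC1def
  have hC1nn : 0 ≤ C1 := mul_nonneg (Nat.cast_nonneg N) (mul_nonneg hBnn (hWnn 0))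
  have hGk : ∀ n, Summable (fun q => ‖glmIter F N g n (q + N)‖) ∧
      ∑' q, ‖glmIter F N g n (q + N)‖ ≤ C1 * (1 / 2) ^ n := by
    intro n
    induction n with
    | zero =>
      have hmaj : ∀ q : ℕ, ‖g (q + N)‖ ≤ ∑ p ∈ range N, B * ‖F (q + (p + N - 1))‖ := by
        intro q
        refine (norm_sum_le _ _).trans (Finset.sum_le_sum fun p _ => ?_)
        rw [norm_mul, show p + (q + N) - 1 = q + (p + N - 1) by omega]
        exact mul_le_mul (hB p) le_rfl (norm_nonneg _) hBnn
      have hmsum : Summable fun q => ∑ p ∈ range N, B * ‖F (q + (p + N - 1))‖ :=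
        summable_sum fun p _ => (hFshift (p + N - 1)).mul_left B
      have hssum : Summable fun q => ‖glmIter F N g 0 (q + N)‖ :=
        Summable.of_nonneg_of_le (fun q => norm_nonneg _) hmaj hmsum
      refine ⟨hssum, ?_⟩
      calc ∑' q, ‖glmIter F N g 0 (q + N)‖
          ≤ ∑' q, ∑ p ∈ range N, B * ‖F (q + (p + N - 1))‖ :=
            Summable.tsum_le_tsum hmaj hssum hmsum
        _ = ∑ p ∈ range N, B * W (p + N - 1) := by
            rw [Summable.tsum_finsetSum fun p _ => (hFshift (p + N - 1)).mul_left B]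
            exact Finset.sum_congr rfl fun p _ => tsum_mul_left
        _ ≤ ∑ p ∈ range N, B * W 0 := Finset.sum_le_sum fun p _ =>
            mul_le_mul_of_nonneg_left (hWanti 0 _ (Nat.zero_le _)) hBnn
        _ = C1 * (1 / 2) ^ 0 := by
            rw [Finset.sum_const, Finset.card_range, nsmul_eq_mul, hC1def]
            ring
    | succ n ih =>
      obtain ⟨ih1, ih2⟩ := ih
      set φ : ℕ → ℂ := glmIter F N g n with hφdef
      set a : ℕ → ℝ := fun q => ‖φ (q + N)‖ with hadef
      have hann : ∀ r, 0 ≤ a r := fun r => norm_nonneg _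
      set b : ℕ → ℝ := fun j => ‖F (j + (2 * N - 1))‖ with hbdef
      have hbnn : ∀ j, 0 ≤ b j := fun j => norm_nonneg _
      set f : ℕ × ℕ → ℝ := fun rq => a rq.1 * b (rq.1 + rq.2) with hfdef
      have hfnn : 0 ≤ f := fun rq => mul_nonneg (hann _) (hbnn _)
      have hbshift : ∀ r, Summable fun q => b (r + q) := by
        intro r
        refine (hFshift (r + (2 * N - 1))).congr fun q => ?_
        rw [hbdef]
        simp only []
        rw [show q + (r + (2 * N - 1)) = (r + q) + (2 * N - 1) by omega]
      have hslice : ∀ r, Summable fun q => f (r, q) := fun r => (hbshift r).mul_left (a r)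
      have hbtail : ∀ r, ∑' q, b (r + q) = W (r + (2 * N - 1)) := by
        intro r
        refine tsum_congr fun q => ?_
        rw [hbdef]
        simp only []
        rw [show (r + q) + (2 * N - 1) = q + (r + (2 * N - 1)) by omega]
      have hmarg : (fun r => ∑' q, f (r, q)) = fun r => a r * W (r + (2 * N - 1)) := by
        funext r
        rw [hfdef]
        simp only []
        rw [tsum_mul_left, hbtail]
      have hmargsum : Summable fun r => a r * W (r + (2 * N - 1)) := by
        refine Summable.of_nonneg_of_le
          (fun r => mul_nonneg (hann r) (hWnn _)) (fun r => ?_) (ih1.mul_right (W 0))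
        exact mul_le_mul_of_nonneg_left (hWanti 0 _ (Nat.zero_le _)) (hann r)
      have hfsum : Summable f :=
        (summable_prod_of_nonneg hfnn).mpr ⟨hslice, hmarg ▸ hmargsum⟩
      have hfswap : Summable fun p : ℕ × ℕ => f p.swap := hfsum.prod_symm
      have hswapextract := (summable_prod_of_nonneg
        (f := fun p : ℕ × ℕ => f p.swap) (fun p => hfnn p.swap)).mp hfswap
      have hDsum : Summable fun q => ∑' r, f (r, q) := hswapextract.2
      have htsumD : ∑' q, ∑' r, f (r, q) ≤ C1 * (1 / 2) ^ (n + 1) := by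
        have e1 : ∑' q, ∑' r, f (r, q) = ∑' p : ℕ × ℕ, f p.swap :=
          (Summable.tsum_prod' hfswap hswapextract.1).symm
        have e2 : ∑' p : ℕ × ℕ, f p.swap = ∑' p : ℕ × ℕ, f p :=
          (Equiv.prodComm ℕ ℕ).tsum_eq f
        have e3 : ∑' p : ℕ × ℕ, f p = ∑' r, ∑' q, f (r, q) :=
          Summable.tsum_prod' hfsum hslice
        rw [e1, e2, e3, hmarg]
        calc ∑' r, a r * W (r + (2 * N - 1))
            ≤ ∑' r, a r * (1 / 2) := by
              refine Summable.tsum_le_tsum (fun r => ?_) (hmarg ▸ hmargsum) (ih1.mul_right _)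
              exact mul_le_mul_of_nonneg_left (hWhalf _ (by omega)) (hann r)
          _ = (∑' r, a r) * (1 / 2) := tsum_mul_right
          _ ≤ (C1 * (1 / 2) ^ n) * (1 / 2) := by
              refine mul_le_mul_of_nonneg_right ih2 (by norm_num)
          _ = C1 * (1 / 2) ^ (n + 1) := by ring
      have hkey : ∀ q : ℕ, ‖glmIter F N g (n + 1) (q + N)‖ ≤ ∑' r, f (r, q) := by
        intro q
        have hinner : Summable fun r => ‖φ (r + N) * F (r + N + (q + N) - 1)‖ := by
          refine Summable.of_nonneg_of_le (fun r => norm_nonneg _) (fun r => ?_)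
            (ih1.mul_right Fm)
          rw [norm_mul]
          exact mul_le_mul le_rfl (hFm _) (norm_nonneg _) (hann r)
        calc ‖glmIter F N g (n + 1) (q + N)‖
            ≤ ∑' r, ‖φ (r + N) * F (r + N + (q + N) - 1)‖ := norm_tsum_le_tsum_norm hinner
          _ = ∑' r, f (r, q) := by
              refine tsum_congr fun r => ?_
              rw [hfdef]
              simp only [norm_mul]
              rw [hbdef]
              simp only []
              rw [show r + N + (q + N) - 1 = (r + q) + (2 * N - 1) by omega]
      have hssum : Summable fun q => ‖glmIter F N g (n + 1) (q + N)‖ :=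
        Summable.of_nonneg_of_le (fun q => norm_nonneg _) hkey hDsum
      exact ⟨hssum, le_trans (Summable.tsum_le_tsum hkey hssum hDsum) htsumD⟩
  -- telescoping identity
  have hstep : ∀ n s, N ≤ s →
      glmIter F N h n s = glmIter F N g n s + glmIter F N h (n + 1) s := by
    intro n
    induction n with
    | zero => exact fun s hs => hsplit s hs
    | succ n ih =>
      intro s hs
      have hsg : Summable fun q => glmIter F N g n (q + N) * F (q + N + s - 1) := by
        refine Summable.of_norm (Summable.of_nonneg_of_le (fun q => norm_nonneg _)
          (fun q => ?_) ((hGk n).1.mul_right Fm))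
        rw [norm_mul]
        exact mul_le_mul le_rfl (hFm _) (norm_nonneg _) (norm_nonneg _)
      have hsh : Summable fun q => glmIter F N h (n + 1) (q + N) * F (q + N + s - 1) :=
        Summable.of_norm (hA (glmIter F N h (n + 1)) (B * (1 / 2) ^ (n + 1))
          (by positivity) (fun q => hHk (n + 1) (q + N)) s).1
      calc glmIter F N h (n + 1) s
          = ∑' q, glmIter F N h n (q + N) * F (q + N + s - 1) := rfl
        _ = ∑' q, (glmIter F N g n (q + N) * F (q + N + s - 1) +
              glmIter F N h (n + 1) (q + N) * F (q + N + s - 1)) := by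
            refine tsum_congr fun q => ?_
            rw [ih (q + N) (by omega), add_mul]
        _ = glmIter F N g (n + 1) s + glmIter F N h (n + 2) s := Summable.tsum_add hsg hsh
  have htel : ∀ n s, N ≤ s →
      h s = (∑ k ∈ range n, glmIter F N g k s) + glmIter F N h n s := by
    intro n
    induction n with
    | zero => intro s _; simp [glmIter]
    | succ n ih =>
      intro s hs
      rw [ih s hs, hstep n s hs, Finset.sum_range_succ]
      ring
  -- final assembly
  refine summable_of_sum_range_le (c := N * B + 2 * C1) (fun n => norm_nonneg _) ?_
  intro R
  rcases le_or_gt R N with hRN | hRN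
  · calc ∑ s ∈ range R, ‖h s‖ ≤ ∑ s ∈ range N, ‖h s‖ :=
        Finset.sum_le_sum_of_subset_of_nonneg (Finset.range_subset_range.mpr hRN)
          (fun i _ _ => norm_nonneg _)
      _ ≤ ∑ s ∈ range N, B := Finset.sum_le_sum fun s _ => hB s
      _ = N * B := by rw [Finset.sum_const, Finset.card_range, nsmul_eq_mul]
      _ ≤ N * B + 2 * C1 := by linarith
  · have key : ∀ n : ℕ, ∑ s ∈ range R, ‖h s‖ ≤ N * B + 2 * C1 + (R * B) * (1 / 2) ^ n := by
      intro n
      have hsplitrange : ∑ s ∈ range R, ‖h s‖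
          = ∑ s ∈ range N, ‖h s‖ + ∑ s ∈ Ico N R, ‖h s‖ := by
        rw [Finset.range_eq_Ico, ← Finset.sum_Ico_consecutive _ (Nat.zero_le N) hRN.le,
          ← Finset.range_eq_Ico]
      have bound1 : ∑ s ∈ range N, ‖h s‖ ≤ N * B := by
        calc ∑ s ∈ range N, ‖h s‖ ≤ ∑ s ∈ range N, B := Finset.sum_le_sum fun s _ => hB s
          _ = N * B := by rw [Finset.sum_const, Finset.card_range, nsmul_eq_mul]
      have bound2 : ∑ s ∈ Ico N R, ‖h s‖ ≤
          (∑ k ∈ range n, ∑ s ∈ Ico N R, ‖glmIter F N g k s‖) +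
            (R - N : ℕ) * (B * (1 / 2) ^ n) := by
        calc ∑ s ∈ Ico N R, ‖h s‖
            ≤ ∑ s ∈ Ico N R, ((∑ k ∈ range n, ‖glmIter F N g k s‖) + B * (1 / 2) ^ n) := by
              refine Finset.sum_le_sum fun s hsmem => ?_
              have hNs : N ≤ s := (Finset.mem_Ico.mp hsmem).1
              rw [htel n s hNs]
              refine (norm_add_le _ _).trans (add_le_add ?_ (hHk n s))
              exact norm_sum_le _ _
          _ = (∑ s ∈ Ico N R, ∑ k ∈ range n, ‖glmIter F N g k s‖) +
              (R - N : ℕ) * (B * (1 / 2) ^ n) := by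
              rw [Finset.sum_add_distrib, Finset.sum_const, Nat.card_Ico, nsmul_eq_mul]
          _ = _ := by rw [Finset.sum_comm]
      have bound3 : ∀ k, ∑ s ∈ Ico N R, ‖glmIter F N g k s‖ ≤ C1 * (1 / 2) ^ k := by
        intro k
        calc ∑ s ∈ Ico N R, ‖glmIter F N g k s‖
            = ∑ q ∈ range (R - N), ‖glmIter F N g k (q + N)‖ := by
              rw [Finset.sum_Ico_eq_sum_range]
              exact Finset.sum_congr rfl fun q _ => by rw [Nat.add_comm]
          _ ≤ ∑' q, ‖glmIter F N g k (q + N)‖ :=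
              Summable.sum_le_tsum _ (fun q _ => norm_nonneg _) (hGk k).1
          _ ≤ C1 * (1 / 2) ^ k := (hGk k).2
      have bound4 : ∑ k ∈ range n, C1 * (1 / 2) ^ k ≤ 2 * C1 := by
        rw [← Finset.mul_sum]
        calc C1 * ∑ k ∈ range n, (1 / 2 : ℝ) ^ k ≤ C1 * 2 :=
            mul_le_mul_of_nonneg_left (sum_geometric_two_le n) hC1nn
          _ = 2 * C1 := by ring
      have bound5 : ((R - N : ℕ) : ℝ) * (B * (1 / 2) ^ n) ≤ (R * B) * (1 / 2) ^ n := by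
        have h1 : ((R - N : ℕ) : ℝ) ≤ (R : ℝ) := by
          exact_mod_cast Nat.cast_le.mpr (Nat.sub_le R N)
        have h2 : (0 : ℝ) ≤ B * (1 / 2) ^ n := by positivity
        calc ((R - N : ℕ) : ℝ) * (B * (1 / 2) ^ n) ≤ (R : ℝ) * (B * (1 / 2) ^ n) :=
            mul_le_mul_of_nonneg_right h1 h2
          _ = (R * B) * (1 / 2) ^ n := by ring
      calc ∑ s ∈ range R, ‖h s‖
          = ∑ s ∈ range N, ‖h s‖ + ∑ s ∈ Ico N R, ‖h s‖ := hsplitrange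
        _ ≤ N * B + ((∑ k ∈ range n, ∑ s ∈ Ico N R, ‖glmIter F N g k s‖) +
            (R - N : ℕ) * (B * (1 / 2) ^ n)) := add_le_add bound1 bound2
        _ ≤ N * B + ((∑ k ∈ range n, C1 * (1 / 2) ^ k) + (R * B) * (1 / 2) ^ n) := by
            refine add_le_add le_rfl (add_le_add ?_ bound5)
            exact Finset.sum_le_sum fun k _ => bound3 k
        _ ≤ N * B + (2 * C1 + (R * B) * (1 / 2) ^ n) := by
            exact add_le_add le_rfl (add_le_add bound4 le_rfl)
        _ = N * B + 2 * C1 + (R * B) * (1 / 2) ^ n := by ring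
    have hlim : Tendsto (fun n : ℕ => N * B + 2 * C1 + (R * B) * (1 / 2) ^ n)
        atTop (nhds (N * B + 2 * C1)) := by
      have : Tendsto (fun n : ℕ => ((1 : ℝ) / 2) ^ n) atTop (nhds 0) :=
        tendsto_pow_atTop_nhds_zero_of_lt_one (by norm_num) (by norm_num)
      have := (this.const_mul (R * B : ℝ)).const_add (N * B + 2 * C1)
      simpa using this
    exact ge_of_tendsto' hlim key
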